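/- Every vector field V ∈ Clⁿ has a unique decomposition V = ∇U + Z, where U ∈ Cl, and Z ∈ Clⁿ is divergence-free (div Z = 0). Consequently, if τ(W*·V) = 0 for every divergence-free W ∈ Clⁿ, then V = ∇U for some U ∈ Cl. -/

import Mathlib

open Matrix

lemma trace_starAlgEquiv {m : ℕ} (hm : 0 < m)
    (Γ : Matrix (Fin m) (Fin m) ℂ ≃⋆ₐ[ℂ] Matrix (Fin m) (Fin m) ℂ)
    (A : Matrix (Fin m) (Fin m) ℂ) : (Γ A).trace = A.trace := by
  set z : Fin m := ⟨0, hm⟩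
  have key : ∀ i j : Fin m, (Γ (Matrix.single i j 1)).trace = if i = j then 1 else 0 := by
    have hdiag : ∀ i : Fin m, (Γ (Matrix.single i i 1)).trace = (Γ (Matrix.single z z 1)).trace := by
      intro i
      have h1 : (Matrix.single i i (1:ℂ)) = Matrix.single i z 1 * Matrix.single z i 1 := by
        rw [single_mul_single_same]; ring_nf
      have h2 : (Matrix.single z z (1:ℂ)) = Matrix.single z i 1 * Matrix.single i z 1 := by
        rw [single_mul_single_same]; ring_nf
      rw [h1, h2, _root_.map_mul, _root_.map_mul, trace_mul_comm]
    have hsum : ∑ i : Fin m, (Γ (Matrix.single i i (1:ℂ))).trace = m := by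
      have hone : (1 : Matrix (Fin m) (Fin m) ℂ) = ∑ i : Fin m, Matrix.single i i 1 := by
        ext a b
        by_cases h : a = b
        · subst h; simp [Matrix.sum_apply, Matrix.single, Matrix.one_apply]
        · simp only [Matrix.sum_apply, Matrix.single, Matrix.one_apply, h, if_neg h,
            Matrix.of_apply]
          have hfilt : Finset.filter (fun x => x = a ∧ x = b) (Finset.univ : Finset (Fin m)) = ∅ := by
            apply Finset.filter_false_of_mem
            rintro x - ⟨rfl, rfl⟩; exact h rfl
          simp [hfilt]
      have h3 := congrArg Matrix.trace (congrArg Γ hone)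
      rw [_root_.map_one, map_sum, trace_sum] at h3
      simpa [Matrix.trace_one] using h3.symm
    have hz : (Γ (Matrix.single z z (1:ℂ))).trace = 1 := by
      have h40 : (∑ i : Fin m, (Γ (Matrix.single i i (1:ℂ))).trace)
          = (m : ℂ) * (Γ (Matrix.single z z (1:ℂ))).trace := by
        rw [Finset.sum_congr rfl (fun i _ => hdiag i), Finset.sum_const,
          Finset.card_univ, Fintype.card_fin, nsmul_eq_mul]
      have h4 : (m : ℂ) * (Γ (Matrix.single z z (1:ℂ))).trace = m := h40.symm.trans hsum
      have hm' : (m : ℂ) ≠ 0 := Nat.cast_ne_zero.mpr hm.ne'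
      have h5 : (m : ℂ) * (Γ (Matrix.single z z (1:ℂ))).trace = (m : ℂ) * 1 := by
        rw [mul_one]; exact h4
      exact mul_left_cancel₀ hm' h5
    intro i j
    by_cases h : i = j
    · subst h; rw [hdiag i, hz]; simp
    · have h1 : (Matrix.single i j (1:ℂ)) = Matrix.single i i 1 * Matrix.single i j 1 := by
        rw [single_mul_single_same]; ring_nf
      have h2 : (Matrix.single i j (1:ℂ)) * Matrix.single i i 1 = 0 :=
        single_mul_single_of_ne _ _ _ _ (Ne.symm h) _
      rw [h1, _root_.map_mul, trace_mul_comm, ← _root_.map_mul, h2, map_zero, trace_zero, if_neg h]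
  conv_lhs => rw [matrix_eq_sum_single A]
  simp only [map_sum, trace_sum]
  have hIJ : ∀ i j : Fin m, (Γ (Matrix.single i j (A i j))).trace = if i = j then A i j else 0 := by
    intro i j
    have h5 : Matrix.single i j (A i j) = A i j • Matrix.single i j 1 := by
      rw [smul_single, smul_eq_mul, mul_one]
    rw [h5, _root_.map_smul, trace_smul, key, smul_eq_mul]
    by_cases h : i = j <;> simp [h]
  simp only [hIJ]
  simp [Matrix.trace, Matrix.diag]

lemma trace_conjTranspose_mul_self {m : ℕ} (A : Matrix (Fin m) (Fin m) ℂ) :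
    (Aᴴ * A).trace = ((∑ j : Fin m, ∑ k : Fin m, Complex.normSq (A k j) : ℝ) : ℂ) := by
  push_cast
  simp [Matrix.trace, Matrix.diag, Matrix.mul_apply, Matrix.conjTranspose_apply,
    Complex.normSq_eq_conj_mul_self]

lemma eq_zero_of_trace_self {m : ℕ} (A : Matrix (Fin m) (Fin m) ℂ)
    (h : (Aᴴ * A).trace = 0) : A = 0 := by
  rw [trace_conjTranspose_mul_self] at h
  have h2 : (∑ j : Fin m, ∑ k : Fin m, Complex.normSq (A k j) : ℝ) = 0 := by
    exact_mod_cast h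
  ext k j
  have h3 := (Finset.sum_eq_zero_iff_of_nonneg (fun j _ =>
    Finset.sum_nonneg fun k _ => Complex.normSq_nonneg _)).mp h2 j (Finset.mem_univ _)
  have h4 := (Finset.sum_eq_zero_iff_of_nonneg (fun k _ => Complex.normSq_nonneg _)).mp
    h3 k (Finset.mem_univ _)
  simpa [Complex.normSq_eq_zero] using h4

theorem clifford_helmholtz_decomposition {n m : ℕ} (hm : 0 < m)
    (Q : Fin n → Matrix (Fin m) (Fin m) ℂ)
    (hCAR : ∀ i j, Q i * Q j + Q j * Q i = if i = j then (2 : Matrix (Fin m) (Fin m) ℂ) else 0)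
    (hsa : ∀ i, (Q i).IsHermitian)
    (τ : Matrix (Fin m) (Fin m) ℂ → ℂ) (hτ : ∀ A, τ A = A.trace / m)
    (Γ : Matrix (Fin m) (Fin m) ℂ ≃⋆ₐ[ℂ] Matrix (Fin m) (Fin m) ℂ)
    (hΓQ : ∀ i, Γ (Q i) = - Q i) (hΓΓ : ∀ A, Γ (Γ A) = A)
    (del delStar : Fin n → Matrix (Fin m) (Fin m) ℂ → Matrix (Fin m) (Fin m) ℂ)
    (hdel : ∀ i A, del i A = (2 : ℂ)⁻¹ • (Q i * A - Γ A * Q i))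
    (hdelStar : ∀ i A, delStar i A = (2 : ℂ)⁻¹ • (Q i * A + Γ A * Q i))
    (dvg : (Fin n → Matrix (Fin m) (Fin m) ℂ) → Matrix (Fin m) (Fin m) ℂ)
    (hdvg : ∀ V, dvg V = - ∑ i : Fin n, delStar i (V i))
    (hker : ∀ A : Matrix (Fin m) (Fin m) ℂ, (∀ i, del i A = 0) → ∃ c : ℂ, A = c • 1) :
    ∀ V : Fin n → Matrix (Fin m) (Fin m) ℂ,
      (∃ (U : Matrix (Fin m) (Fin m) ℂ) (Z : Fin n → Matrix (Fin m) (Fin m) ℂ),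
        (∀ i, V i = del i U + Z i) ∧ dvg Z = 0 ∧
        ∀ (U' : Matrix (Fin m) (Fin m) ℂ) (Z' : Fin n → Matrix (Fin m) (Fin m) ℂ),
          (∀ i, V i = del i U' + Z' i) → dvg Z' = 0 →
            (∀ i, del i U' = del i U) ∧ Z' = Z) ∧
      ((∀ W : Fin n → Matrix (Fin m) (Fin m) ℂ,
          dvg W = 0 → τ (∑ i : Fin n, (W i)ᴴ * V i) = 0) →
        ∃ U : Matrix (Fin m) (Fin m) ℂ, ∀ i, V i = del i U) := by
  intro V
  haveI : Nonempty (Fin m) := ⟨⟨0, hm⟩⟩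
  have hm' : (m : ℂ) ≠ 0 := Nat.cast_ne_zero.mpr hm.ne'
  have htr : ∀ A, (Γ A).trace = A.trace := trace_starAlgEquiv hm Γ
  have hΓstar : ∀ A : Matrix (Fin m) (Fin m) ℂ, Γ Aᴴ = (Γ A)ᴴ := by
    intro A
    simpa [Matrix.star_eq_conjTranspose] using map_star Γ A
  have hdel1 : ∀ i, del i (1 : Matrix (Fin m) (Fin m) ℂ) = 0 := by
    intro i; rw [hdel, _root_.map_one]; simp
  -- linearity helpers
  have hdel_add : ∀ i A B, del i (A + B) = del i A + del i B := by
    intro i A B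
    rw [hdel, hdel, hdel, ← smul_add]
    congr 1
    rw [mul_add, map_add, add_mul]
    abel
  have hdel_smul : ∀ i (c : ℂ) A, del i (c • A) = c • del i A := by
    intro i c A
    rw [hdel, hdel]
    rw [mul_smul_comm, _root_.map_smul, smul_mul_assoc, ← smul_sub, smul_comm]
  have hdel_sub : ∀ i A B, del i (A - B) = del i A - del i B := by
    intro i A B
    have := hdel_add i (A - B) B
    rw [sub_add_cancel] at this
    rw [this]; abel
  have hdelStar_add : ∀ i A B, delStar i (A + B) = delStar i A + delStar i B := by
    intro i A B
    rw [hdelStar, hdelStar, hdelStar, ← smul_add]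
    congr 1
    rw [mul_add, map_add, add_mul]
    abel
  have hdelStar_smul : ∀ i (c : ℂ) A, delStar i (c • A) = c • delStar i A := by
    intro i c A
    rw [hdelStar, hdelStar]
    rw [mul_smul_comm, _root_.map_smul, smul_mul_assoc, ← smul_add, smul_comm]
  have hdelStar_sub : ∀ i A B, delStar i (A - B) = delStar i A - delStar i B := by
    intro i A B
    have := hdelStar_add i (A - B) B
    rw [sub_add_cancel] at this
    rw [this]; abel
  -- adjoint identity
  have hadj : ∀ (i : Fin n) (A B : Matrix (Fin m) (Fin m) ℂ),
      ((del i A)ᴴ * B).trace = (Aᴴ * delStar i B).trace := by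
    intro i A B
    rw [hdel, hdelStar]
    have e1 : ((2:ℂ)⁻¹ • (Q i * A - Γ A * Q i))ᴴ = (2:ℂ)⁻¹ • (Aᴴ * Q i - Q i * Γ Aᴴ) := by
      rw [conjTranspose_smul, conjTranspose_sub, conjTranspose_mul, conjTranspose_mul,
        (hsa i), hΓstar]
      congr 1
      simp
    rw [e1, smul_mul_assoc, trace_smul, mul_smul_comm, trace_smul]
    congr 1
    have key : (Q i * Γ Aᴴ * B).trace = -(Aᴴ * (Γ B * Q i)).trace := by
      have c1 : Γ Aᴴ * B * Q i = Γ (Aᴴ * Γ B * (- Q i)) := by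
        rw [_root_.map_mul, _root_.map_mul, hΓΓ, map_neg, hΓQ, neg_neg]
      calc (Q i * Γ Aᴴ * B).trace = (Q i * (Γ Aᴴ * B)).trace := by rw [mul_assoc]
        _ = ((Γ Aᴴ * B) * Q i).trace := trace_mul_comm _ _
        _ = (Γ (Aᴴ * Γ B * (- Q i))).trace := by rw [c1]
        _ = (Aᴴ * Γ B * (- Q i)).trace := htr _
        _ = -(Aᴴ * (Γ B * Q i)).trace := by rw [mul_neg, trace_neg, mul_assoc]
    rw [sub_mul, mul_add, trace_sub, trace_add, key, mul_assoc]
    ring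
  -- trace of delStar is zero
  have htrS : ∀ (i : Fin n) (B : Matrix (Fin m) (Fin m) ℂ), (delStar i B).trace = 0 := by
    intro i B
    have h := (hadj i 1 B).symm
    rwa [hdel1 i, conjTranspose_zero, Matrix.zero_mul, trace_zero, conjTranspose_one,
      Matrix.one_mul] at h
  -- the number operator
  let NL : Matrix (Fin m) (Fin m) ℂ →ₗ[ℂ] Matrix (Fin m) (Fin m) ℂ :=
    { toFun := fun A => ∑ i : Fin n, delStar i (del i A)
      map_add' := fun A B => by
        simp only [hdel_add, hdelStar_add]
        rw [Finset.sum_add_distrib]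
      map_smul' := fun c A => by
        simp only [hdel_smul, hdelStar_smul, RingHom.id_apply]
        rw [Finset.smul_sum] }
  have hNLapp : ∀ A, NL A = ∑ i : Fin n, delStar i (del i A) := fun _ => rfl
  -- helper: sum of norms zero
  have hzero : ∀ (F : Fin n → Matrix (Fin m) (Fin m) ℂ),
      (∑ i : Fin n, ((F i)ᴴ * F i).trace) = 0 → ∀ i, F i = 0 := by
    intro F hF i
    have h1 : ∑ i : Fin n, ((∑ a : Fin m, ∑ b : Fin m, Complex.normSq (F i b a) : ℝ) : ℂ) = 0 := by
      rw [← Finset.sum_congr rfl fun i _ => trace_conjTranspose_mul_self (F i)]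
      exact hF
    have h2 : ∑ i : Fin n, (∑ a : Fin m, ∑ b : Fin m, Complex.normSq (F i b a) : ℝ) = 0 := by
      exact_mod_cast h1
    have h3 := (Finset.sum_eq_zero_iff_of_nonneg (fun i _ =>
      Finset.sum_nonneg fun a _ => Finset.sum_nonneg fun b _ => Complex.normSq_nonneg _)).mp
      h2 i (Finset.mem_univ _)
    apply eq_zero_of_trace_self
    rw [trace_conjTranspose_mul_self, h3, Complex.ofReal_zero]
  -- NL A = 0 implies del i A = 0
  have hNL0 : ∀ A, NL A = 0 → ∀ i, del i A = 0 := by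
    intro A hA
    apply hzero
    have h1 : (Aᴴ * NL A).trace = ∑ j : Fin n, ((del j A)ᴴ * (del j A)).trace := by
      rw [hNLapp, Matrix.mul_sum, trace_sum]
      exact Finset.sum_congr rfl fun j _ => (hadj j A (del j A)).symm
    rw [← h1, hA, Matrix.mul_zero, trace_zero]
  -- kernel of NL
  have hkerNL : LinearMap.ker NL = Submodule.span ℂ {(1 : Matrix (Fin m) (Fin m) ℂ)} := by
    ext A
    rw [LinearMap.mem_ker, Submodule.mem_span_singleton]
    constructor
    · intro hA
      obtain ⟨c, hc⟩ := hker A (hNL0 A hA)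
      exact ⟨c, hc.symm⟩
    · rintro ⟨c, rfl⟩
      rw [hNLapp]
      apply Finset.sum_eq_zero
      intro i _
      rw [hdel_smul, hdel1, smul_zero, hdelStar, _root_.map_zero, Matrix.mul_zero,
        Matrix.zero_mul, add_zero, smul_zero]
  -- range of NL = kernel of trace
  have hranNL : LinearMap.range NL = LinearMap.ker (Matrix.traceLinearMap (Fin m) ℂ ℂ) := by
    have hle : LinearMap.range NL ≤ LinearMap.ker (Matrix.traceLinearMap (Fin m) ℂ ℂ) := by
      rintro B ⟨A, rfl⟩
      rw [LinearMap.mem_ker]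
      show (NL A).trace = 0
      rw [hNLapp, trace_sum]
      exact Finset.sum_eq_zero fun i _ => htrS i _
    apply Submodule.eq_of_le_of_finrank_le hle
    have r1 := LinearMap.finrank_range_add_finrank_ker NL
    have r2 := LinearMap.finrank_range_add_finrank_ker (Matrix.traceLinearMap (Fin m) ℂ ℂ)
    have rk : Module.finrank ℂ (LinearMap.ker NL) = 1 := by
      rw [hkerNL]
      exact finrank_span_singleton one_ne_zero
    have rT : Module.finrank ℂ (LinearMap.range (Matrix.traceLinearMap (Fin m) ℂ ℂ)) = 1 := by
      have hsurj : LinearMap.range (Matrix.traceLinearMap (Fin m) ℂ ℂ) = ⊤ := by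
        rw [LinearMap.range_eq_top]
        intro c
        refine ⟨Matrix.diagonal (Pi.single ⟨0, hm⟩ c), ?_⟩
        simp [Matrix.traceLinearMap, Matrix.trace_diagonal]
      rw [hsurj, finrank_top]
      exact Module.finrank_self ℂ
    omega
  -- conjugate-symmetry of the trace pairing
  have htrconj : ∀ X Y : Matrix (Fin m) (Fin m) ℂ,
      (Xᴴ * Y).trace = star ((Yᴴ * X).trace) := by
    intro X Y
    rw [← trace_conjTranspose, conjTranspose_mul, conjTranspose_conjTranspose]
  -- Existence of the decomposition
  have hbmem : (∑ i : Fin n, delStar i (V i)) ∈ LinearMap.range NL := by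
    rw [hranNL, LinearMap.mem_ker]
    show (∑ i : Fin n, delStar i (V i)).trace = 0
    rw [trace_sum]
    exact Finset.sum_eq_zero fun i _ => htrS i _
  obtain ⟨U, hU⟩ := hbmem
  set Z : Fin n → Matrix (Fin m) (Fin m) ℂ := fun i => V i - del i U with hZ
  have hdec : ∀ i, V i = del i U + Z i := by
    intro i; rw [hZ]; ring_nf; abel
  have hsumZ : ∑ i : Fin n, delStar i (Z i) = 0 := by
    have : ∑ i : Fin n, delStar i (Z i)
        = (∑ i : Fin n, delStar i (V i)) - ∑ i : Fin n, delStar i (del i U) := by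
      rw [← Finset.sum_sub_distrib]
      exact Finset.sum_congr rfl fun i _ => hdelStar_sub i _ _
    rw [this, ← hNLapp, hU, sub_self]
  have hdivZ : dvg Z = 0 := by rw [hdvg, hsumZ, neg_zero]
  -- Uniqueness
  have huniq : ∀ (U' : Matrix (Fin m) (Fin m) ℂ) (Z' : Fin n → Matrix (Fin m) (Fin m) ℂ),
      (∀ i, V i = del i U' + Z' i) → dvg Z' = 0 →
        (∀ i, del i U' = del i U) ∧ Z' = Z := by
    intro U' Z' hdec' hdiv'
    have hsumZ' : ∑ i : Fin n, delStar i (Z' i) = 0 := by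
      have := hdiv'
      rw [hdvg, neg_eq_zero] at this
      exact this
    have hdiff : ∀ i, del i (U' - U) = Z i - Z' i := by
      intro i
      rw [hdel_sub]
      have h1 := hdec i
      have h2 := hdec' i
      have : del i U + Z i = del i U' + Z' i := h1 ▸ h2 ▸ rfl
      rw [sub_eq_sub_iff_add_eq_add, ← this]
      abel
    have hNLd : NL (U' - U) = 0 := by
      rw [hNLapp]
      have : ∑ i : Fin n, delStar i (del i (U' - U))
          = ∑ i : Fin n, delStar i (Z i) - ∑ i : Fin n, delStar i (Z' i) := by
        rw [← Finset.sum_sub_distrib]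
        exact Finset.sum_congr rfl fun i _ => by rw [hdiff i, hdelStar_sub]
      rw [this, hsumZ, hsumZ', sub_zero]
    have hdel0 : ∀ i, del i (U' - U) = 0 := hNL0 _ hNLd
    have hdeleq : ∀ i, del i U' = del i U := by
      intro i
      have := hdel0 i
      rw [hdel_sub, sub_eq_zero] at this
      exact this
    refine ⟨hdeleq, funext fun i => ?_⟩
    have h1 := hdec i
    have h2 := hdec' i
    rw [hdeleq i] at h2
    have := h1.symm.trans h2
    exact (add_left_cancel this).symm
  refine ⟨⟨U, Z, hdec, hdivZ, huniq⟩, ?_⟩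
  -- Consequence
  intro hW
  have hτZ := hW Z hdivZ
  rw [hτ, div_eq_zero_iff] at hτZ
  have htr0 : (∑ i : Fin n, (Z i)ᴴ * V i).trace = 0 := hτZ.resolve_right hm'
  rw [trace_sum] at htr0
  have hsplit : ∀ i, ((Z i)ᴴ * V i).trace
      = ((Z i)ᴴ * del i U).trace + ((Z i)ᴴ * Z i).trace := by
    intro i
    rw [hdec i, Matrix.mul_add, trace_add]
  rw [Finset.sum_congr rfl fun i _ => hsplit i, Finset.sum_add_distrib] at htr0
  have hfirst : ∑ i : Fin n, ((Z i)ᴴ * del i U).trace = 0 := by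
    have e : ∀ i : Fin n, ((Z i)ᴴ * del i U).trace = star ((Uᴴ * delStar i (Z i)).trace) := by
      intro i
      rw [htrconj, hadj]
    rw [Finset.sum_congr rfl fun i _ => e i, ← star_sum]
    have : ∑ i : Fin n, (Uᴴ * delStar i (Z i)).trace = 0 := by
      rw [← trace_sum, ← Matrix.mul_sum, hsumZ, Matrix.mul_zero, trace_zero]
    rw [this, star_zero]
  rw [hfirst, zero_add] at htr0
  have hZ0 : ∀ i, Z i = 0 := hzero Z htr0
  exact ⟨U, fun i => by rw [hdec i, hZ0 i, add_zero]⟩
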